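/- arXiv:2605.23854 — 2 statements merged into one kernel-verified Lean document; each statement's English description precedes it below -/
import Mathlib

section
/- For the stochastic block model SBM(n, m, p, q) with m blocks of size n/m and edge probabilities q_{ij} = q_l if i, j ∈ B_l and q_{ij} = p otherwise (with p < q_1 ≤ ⋯ ≤ q_m), the variation condition holds with constant s = 2m: for every l ∈ [m] and every i ∈ B_l, n·Σ_{j≠i} q_{ij}² ≤ 2m·(Σ_{j≠i} q_{ij})². -/
/-- The block of vertex `i` in a stochastic block model with `m` consecutive blocks of size `b`. -/
def blk (m b : ℕ) (i : Fin (m * b)) : Fin m :=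
  ⟨i.val / b, by
    have hb : 0 < b := by
      rcases Nat.eq_zero_or_pos b with h | h
      · subst h; exact absurd i.isLt (by simp)
      · exact h
    exact (Nat.div_lt_iff_lt_mul hb).mpr i.isLt⟩

/-- Edge sampling probabilities of the SBM: `q l` inside block `l`, `p` across blocks. -/
def sbmQ (m b : ℕ) (p : ℝ) (q : Fin m → ℝ) (i j : Fin (m * b)) : ℝ :=
  if blk m b i = blk m b j then q (blk m b i) else p

lemma card_blk (m b : ℕ) (hb : 0 < b) (c : Fin m) :
    (Finset.univ.filter (fun j : Fin (m*b) => blk m b j = c)).card = b := by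
  have key : ∀ j : Fin (m*b), blk m b j = c ↔ j.val ∈ Finset.Ico (c.val*b) (c.val*b+b) := by
    intro j
    simp only [blk, Fin.ext_iff, Finset.mem_Ico]
    constructor
    · rintro h
      constructor
      · rw [← h]; exact Nat.div_mul_le_self _ _
      · rw [← h]
        calc j.val < (j.val / b + 1) * b := (Nat.div_lt_iff_lt_mul hb).mp (Nat.lt_succ_self _)
          _ = j.val / b * b + b := by ring
    · rintro ⟨h1, h2⟩
      have := Nat.div_le_div_right (c := b) h1
      rw [Nat.mul_div_cancel _ hb] at this
      have h3 : j.val / b < c.val + 1 := by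
        apply Nat.div_lt_of_lt_mul; calc j.val < c.val*b+b := h2
          _ = (c.val+1)*b := by ring
          _ ≤ b * (c.val+1) := by rw [Nat.mul_comm]
      omega
  rw [Finset.card_nbij (i := Fin.val) (t := Finset.Ico (c.val*b) (c.val*b+b))]
  · simp
  · intro a ha; simp only [Finset.mem_coe, Finset.mem_filter] at ha; exact (key a).mp ha.2
  · intro a ha b' hb' h; exact Fin.ext h
  · intro x hx
    simp only [Finset.coe_Ico, Set.mem_Ico] at hx
    have hxlt : x < m * b := by
      calc x < c.val*b + b := hx.2
        _ = (c.val+1)*b := by ring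
        _ ≤ m*b := Nat.mul_le_mul_right _ (by omega)
    refine ⟨⟨x, hxlt⟩, ?_, rfl⟩
    simp only [Finset.coe_filter, Set.mem_setOf_eq, Finset.mem_univ, true_and]
    exact (key _).mpr (by simp [hx.1, hx.2])

/-- the variation condition holds with constant s = 2m for the SBM. -/
theorem stmt12 (m b : ℕ) (hm : 1 < m) (hb : 2 ≤ b) (p : ℝ) (q : Fin m → ℝ)
    (hp : 0 ≤ p) (hmono : Monotone q) (hq1 : ∀ l, q l ≤ 1)
    (hpq : p < q ⟨0, by omega⟩) :
    ∀ i : Fin (m * b),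
      (m * b : ℝ) * ∑ j ∈ Finset.univ.filter (fun j => j ≠ i), (sbmQ m b p q i j) ^ 2 ≤
        2 * m * (∑ j ∈ Finset.univ.filter (fun j => j ≠ i), sbmQ m b p q i j) ^ 2 := by
  intro i
  have hb0 : 0 < b := by omega
  have hle : b ≤ m * b := Nat.le_mul_of_pos_left b (by omega)
  have key : ∀ (A C : ℝ),
      ∑ j ∈ Finset.univ.filter (fun j : Fin (m*b) => j ≠ i),
        (if blk m b i = blk m b j then A else C)
      = ((b:ℝ) - 1) * A + ((m:ℝ) - 1) * b * C := by
    intro A C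
    rw [Finset.filter_ne', Finset.sum_erase_eq_sub (Finset.mem_univ i)]
    rw [Finset.sum_ite, Finset.sum_const, Finset.sum_const]
    have hcard : (Finset.univ.filter (fun j : Fin (m*b) => blk m b i = blk m b j)).card = b := by
      rw [show (Finset.univ.filter (fun j : Fin (m*b) => blk m b i = blk m b j))
          = (Finset.univ.filter (fun j => blk m b j = blk m b i)) from by
        ext j; simp [eq_comm]]
      exact card_blk m b hb0 _
    have hcard2 : (Finset.univ.filter (fun j : Fin (m*b) => ¬ blk m b i = blk m b j)).card
        = m * b - b := by
      rw [Finset.filter_not, Finset.card_sdiff_of_subset (Finset.filter_subset _ _), hcard,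
        Finset.card_univ]
      simp
    rw [hcard, hcard2, if_pos rfl]
    simp only [nsmul_eq_mul]
    push_cast [Nat.cast_sub hle]
    ring
  set a := q (blk m b i) with ha_def
  have ha : (0:ℝ) ≤ a := by
    have h0 : (⟨0, by omega⟩ : Fin m) ≤ blk m b i := by simp [Fin.le_def]
    exact le_of_lt (lt_of_le_of_lt hp (lt_of_lt_of_le hpq (hmono h0)))
  have hsq : ∑ j ∈ Finset.univ.filter (fun j => j ≠ i), (sbmQ m b p q i j) ^ 2
      = ((b:ℝ) - 1) * a^2 + ((m:ℝ) - 1) * b * p^2 := by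
    rw [← key (a^2) (p^2)]
    apply Finset.sum_congr rfl
    intro j _
    simp only [sbmQ, ← ha_def]
    split <;> rfl
  have hs : ∑ j ∈ Finset.univ.filter (fun j => j ≠ i), sbmQ m b p q i j
      = ((b:ℝ) - 1) * a + ((m:ℝ) - 1) * b * p := by
    rw [← key a p]
    apply Finset.sum_congr rfl
    intro j _
    simp [sbmQ, ← ha_def]
  rw [hsq, hs]
  have hB : (2:ℝ) ≤ b := by exact_mod_cast hb
  have hM : (2:ℝ) ≤ m := by exact_mod_cast hm
  have e1 : 0 ≤ (m:ℝ) * ((b:ℝ)-1) * ((b:ℝ)-2) * a^2 :=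
    mul_nonneg (mul_nonneg (mul_nonneg (by linarith) (by linarith)) (by linarith)) (sq_nonneg a)
  have e2 : 0 ≤ (m:ℝ) * (b:ℝ)^2 * ((m:ℝ)-1) * (2*(m:ℝ)-3) * p^2 :=
    mul_nonneg (mul_nonneg (mul_nonneg (mul_nonneg (by linarith) (sq_nonneg _)) (by linarith))
      (by linarith)) (sq_nonneg p)
  have e3 : 0 ≤ 4*(m:ℝ) * ((b:ℝ)-1) * ((m:ℝ)-1) * (b:ℝ) * (a*p) :=
    mul_nonneg (mul_nonneg (mul_nonneg (mul_nonneg (by linarith) (by linarith)) (by linarith))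
      (by linarith)) (mul_nonneg ha hp)
  nlinarith [e1, e2, e3]
end

section
/- Let G be the graph on 5 vertices {1,2,3,4,5} with edge set {(1,2),(1,3),(1,4),(4,5)}, and let G' be G with the additional edge (2,3). Then the second smallest eigenvalue of the symmetric normalized Laplacian strictly decreases upon adding the edge: λ_{n−1}(L^{sym}(G')) < λ_{n−1}(L^{sym}(G)). (Numerically, λ_{n−1}(L^{sym}(G)) ≈ 0.423 and λ_{n−1}(L^{sym}(G')) ≈ 0.346.) -/
/-- The second smallest eigenvalue of a real matrix with real spectrum: the entry at index 1
of the ascending sort of the (multiset of) roots of its characteristic polynomial. -/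
noncomputable def sndSmallestEig {n : ℕ} (M : Matrix (Fin n) (Fin n) ℝ) : ℝ :=
  (M.charpoly.roots.sort (· ≤ ·)).getD 1 0

/-- The symmetric normalized Laplacian L^sym = I − D^{−1/2} A D^{−1/2} of a graph with
adjacency matrix A. -/
noncomputable def lsym {n : ℕ} (A : Matrix (Fin n) (Fin n) ℝ) : Matrix (Fin n) (Fin n) ℝ :=
  1 - Matrix.diagonal (fun i => (Real.sqrt (∑ j, A i j))⁻¹) * A *
      Matrix.diagonal (fun i => (Real.sqrt (∑ j, A i j))⁻¹)

/-- Adjacency matrix of the 5-vertex graph with edges (1,2),(1,3),(1,4),(4,5). -/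
noncomputable def adjG : Matrix (Fin 5) (Fin 5) ℝ :=
  !![0, 1, 1, 1, 0;
     1, 0, 0, 0, 0;
     1, 0, 0, 0, 0;
     1, 0, 0, 0, 1;
     0, 0, 0, 1, 0]

/-- Adjacency matrix of the same graph with the extra edge (2,3). -/
noncomputable def adjG' : Matrix (Fin 5) (Fin 5) ℝ :=
  !![0, 1, 1, 1, 0;
     1, 0, 1, 0, 0;
     1, 1, 0, 0, 0;
     1, 0, 0, 0, 1;
     0, 0, 0, 1, 0]

open Polynomial Matrix in
/-- Characteristic polynomials are invariant under conjugation. -/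
lemma stmt18_charpoly_conj {n : ℕ} (P M Q : Matrix (Fin n) (Fin n) ℝ)
    (hPQ : P * Q = 1) : (P * M * Q).charpoly = M.charpoly := by
  have hmap : ∀ A B : Matrix (Fin n) (Fin n) ℝ,
      (A * B).map (C : ℝ →+* ℝ[X]) = A.map C * B.map C := fun A B => by
    simpa using (RingHom.mapMatrix (C : ℝ →+* ℝ[X])).map_mul A B
  have key : charmatrix (P * M * Q) = P.map C * charmatrix M * Q.map C := by
    rw [charmatrix, charmatrix, mul_sub, sub_mul]
    congr 1
    · rw [mul_assoc]
      rw [show scalar (Fin n) (X : ℝ[X]) * Q.map C = Q.map C * scalar (Fin n) X from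
        (Matrix.scalar_commute (X : ℝ[X]) (Commute.all X) (Q.map C))]
      rw [← mul_assoc, ← hmap, hPQ]
      simp
    · simp only [RingHom.mapMatrix_apply]
      rw [← hmap, ← hmap]
  rw [Matrix.charpoly, Matrix.charpoly, key, det_mul, det_mul]
  have h1 : ((P.map (C : ℝ →+* ℝ[X])).det) * ((Q.map C).det) = 1 := by
    rw [mul_comm, ← det_mul, ← hmap, mul_eq_one_comm.mp hPQ]
    simp
  calc (P.map (C : ℝ →+* ℝ[X])).det * (charmatrix M).det * (Q.map C).det
      = ((P.map (C : ℝ →+* ℝ[X])).det * (Q.map C).det) * (charmatrix M).det := by ring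
    _ = (charmatrix M).det := by rw [h1, one_mul]

open Polynomial Matrix in
lemma stmt18_eval_charpoly {n : ℕ} (M : Matrix (Fin n) (Fin n) ℝ) (x : ℝ) :
    (M.charpoly).eval x =
      (Matrix.of fun i j => (if i = j then x else 0) - M i j).det := by
  rw [Matrix.charpoly, ← Polynomial.coe_evalRingHom, RingHom.map_det]
  congr 1
  ext i j
  by_cases h : i = j <;>
    simp [h, charmatrix_apply, Matrix.diagonal, Matrix.one_apply]

/-- The random-walk style Laplacian I − D⁻¹A for `adjG`, a rational matrix. -/
noncomputable def stmt18NG : Matrix (Fin 5) (Fin 5) ℝ :=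
  !![1, -1/3, -1/3, -1/3, 0; -1, 1, 0, 0, 0; -1, 0, 1, 0, 0;
     -1/2, 0, 0, 1, -1/2; 0, 0, 0, -1, 1]

/-- The random-walk style Laplacian I − D⁻¹A for `adjG'`, a rational matrix. -/
noncomputable def stmt18NG' : Matrix (Fin 5) (Fin 5) ℝ :=
  !![1, -1/3, -1/3, -1/3, 0; -1/2, 1, -1/2, 0, 0; -1/2, -1/2, 1, 0, 0;
     -1/2, 0, 0, 1, -1/2; 0, 0, 0, -1, 1]

set_option maxHeartbeats 1000000 in
lemma stmt18_conjG : lsym adjG =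
    Matrix.diagonal ![Real.sqrt 3, 1, 1, Real.sqrt 2, 1] * stmt18NG *
    Matrix.diagonal ![(Real.sqrt 3)⁻¹, 1, 1, (Real.sqrt 2)⁻¹, 1] := by
  have h3 : Real.sqrt 3 * Real.sqrt 3 = 3 := Real.mul_self_sqrt (by norm_num)
  have h2 : Real.sqrt 2 * Real.sqrt 2 = 2 := Real.mul_self_sqrt (by norm_num)
  have h3p : (0:ℝ) < Real.sqrt 3 := Real.sqrt_pos.mpr (by norm_num)
  have h2p : (0:ℝ) < Real.sqrt 2 := Real.sqrt_pos.mpr (by norm_num)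
  have hdeg : (fun i => (Real.sqrt (∑ j, adjG i j))⁻¹) =
      ![(Real.sqrt 3)⁻¹, 1, 1, (Real.sqrt 2)⁻¹, 1] := by
    funext i
    fin_cases i <;> simp [adjG, Fin.sum_univ_five] <;> norm_num
  rw [lsym, hdeg]
  ext i j
  fin_cases i <;> fin_cases j <;>
    simp [adjG, stmt18NG, Matrix.mul_apply, Matrix.diagonal, Matrix.one_apply,
      Fin.sum_univ_five, Matrix.vecHead, Matrix.vecTail] <;>
    field_simp <;> nlinarith [h2, h3, h2p, h3p]

set_option maxHeartbeats 1000000 in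
lemma stmt18_conjG' : lsym adjG' =
    Matrix.diagonal ![Real.sqrt 3, Real.sqrt 2, Real.sqrt 2, Real.sqrt 2, 1] * stmt18NG' *
    Matrix.diagonal ![(Real.sqrt 3)⁻¹, (Real.sqrt 2)⁻¹, (Real.sqrt 2)⁻¹, (Real.sqrt 2)⁻¹, 1] := by
  have h3 : Real.sqrt 3 * Real.sqrt 3 = 3 := Real.mul_self_sqrt (by norm_num)
  have h2 : Real.sqrt 2 * Real.sqrt 2 = 2 := Real.mul_self_sqrt (by norm_num)
  have h3p : (0:ℝ) < Real.sqrt 3 := Real.sqrt_pos.mpr (by norm_num)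
  have h2p : (0:ℝ) < Real.sqrt 2 := Real.sqrt_pos.mpr (by norm_num)
  have hdeg : (fun i => (Real.sqrt (∑ j, adjG' i j))⁻¹) =
      ![(Real.sqrt 3)⁻¹, (Real.sqrt 2)⁻¹, (Real.sqrt 2)⁻¹, (Real.sqrt 2)⁻¹, 1] := by
    funext i
    fin_cases i <;> simp [adjG', Fin.sum_univ_five] <;> norm_num
  rw [lsym, hdeg]
  ext i j
  fin_cases i <;> fin_cases j <;>
    simp [adjG', stmt18NG', Matrix.mul_apply, Matrix.diagonal, Matrix.one_apply,
      Fin.sum_univ_five, Matrix.vecHead, Matrix.vecTail] <;>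
    field_simp <;> nlinarith [h2, h3, h2p, h3p]

lemma stmt18_charpolyG : (lsym adjG).charpoly = stmt18NG.charpoly := by
  rw [stmt18_conjG]
  refine stmt18_charpoly_conj _ _ _ ?_
  rw [Matrix.diagonal_mul_diagonal]
  have h3 : Real.sqrt 3 ≠ 0 := ne_of_gt (Real.sqrt_pos.mpr (by norm_num))
  have h2 : Real.sqrt 2 ≠ 0 := ne_of_gt (Real.sqrt_pos.mpr (by norm_num))
  have hv : (fun i => ![Real.sqrt 3, 1, 1, Real.sqrt 2, 1] i *
      ![(Real.sqrt 3)⁻¹, 1, 1, (Real.sqrt 2)⁻¹, 1] i) = fun _ : Fin 5 => (1:ℝ) := by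
    funext i
    fin_cases i <;> simp [Matrix.vecHead, Matrix.vecTail] <;> field_simp
  rw [hv, Matrix.diagonal_one]

lemma stmt18_charpolyG' : (lsym adjG').charpoly = stmt18NG'.charpoly := by
  rw [stmt18_conjG']
  refine stmt18_charpoly_conj _ _ _ ?_
  rw [Matrix.diagonal_mul_diagonal]
  have h3 : Real.sqrt 3 ≠ 0 := ne_of_gt (Real.sqrt_pos.mpr (by norm_num))
  have h2 : Real.sqrt 2 ≠ 0 := ne_of_gt (Real.sqrt_pos.mpr (by norm_num))
  have hv : (fun i => ![Real.sqrt 3, Real.sqrt 2, Real.sqrt 2, Real.sqrt 2, 1] i *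
      ![(Real.sqrt 3)⁻¹, (Real.sqrt 2)⁻¹, (Real.sqrt 2)⁻¹, (Real.sqrt 2)⁻¹, 1] i)
      = fun _ : Fin 5 => (1:ℝ) := by
    funext i
    fin_cases i <;> simp [Matrix.vecHead, Matrix.vecTail] <;> field_simp
  rw [hv, Matrix.diagonal_one]

set_option maxHeartbeats 1000000 in
lemma stmt18_evalNG (x : ℝ) : (stmt18NG.charpoly).eval x =
    x * (x - 1) * (x - 2) * (x^2 - 2*x + 2/3) := by
  rw [stmt18_eval_charpoly]
  have : (Matrix.of fun i j => (if i = j then x else 0) - stmt18NG i j) =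
      !![x-1, 1/3, 1/3, 1/3, 0; 1, x-1, 0, 0, 0; 1, 0, x-1, 0, 0;
         1/2, 0, 0, x-1, 1/2; 0, 0, 0, 1, x-1] := by
    ext i j
    fin_cases i <;> fin_cases j <;>
      simp [stmt18NG, Matrix.vecHead, Matrix.vecTail] <;> norm_num
  rw [this]
  simp [Matrix.det_succ_row_zero, Fin.sum_univ_succ, Fin.succAbove]
  ring

set_option maxHeartbeats 1000000 in
lemma stmt18_evalNG' (x : ℝ) : (stmt18NG'.charpoly).eval x =
    x * (x - 3/2) * (x^3 - 7/2*x^2 + 7/2*x - 5/6) := by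
  rw [stmt18_eval_charpoly]
  have : (Matrix.of fun i j => (if i = j then x else 0) - stmt18NG' i j) =
      !![x-1, 1/3, 1/3, 1/3, 0; 1/2, x-1, 1/2, 0, 0; 1/2, 1/2, x-1, 0, 0;
         1/2, 0, 0, x-1, 1/2; 0, 0, 0, 1, x-1] := by
    ext i j
    fin_cases i <;> fin_cases j <;>
      simp [stmt18NG', Matrix.vecHead, Matrix.vecTail] <;> norm_num
  rw [this]
  simp [Matrix.det_succ_row_zero, Fin.sum_univ_succ, Fin.succAbove]
  ring

open Polynomial in
/-- A monic-degree-5 real polynomial with five pairwise distinct roots has exactly those roots. -/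
lemma stmt18_roots_quintic (p : Polynomial ℝ) (hp : p ≠ 0) (hdeg : p.natDegree = 5)
    (a b c d e : ℝ)
    (hab : a ≠ b) (hac : a ≠ c) (had : a ≠ d) (hae : a ≠ e)
    (hbc : b ≠ c) (hbd : b ≠ d) (hbe : b ≠ e)
    (hcd : c ≠ d) (hce : c ≠ e) (hde : d ≠ e)
    (ha : p.IsRoot a) (hb : p.IsRoot b) (hc : p.IsRoot c)
    (hd : p.IsRoot d) (he : p.IsRoot e) :
    p.roots = {a, b, c, d, e} := by
  have hnodup : ({a, b, c, d, e} : Multiset ℝ).Nodup := by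
    simp [Multiset.nodup_cons, hab, hac, had, hae, hbc, hbd, hbe, hcd, hce, hde]
  have hsub : ({a, b, c, d, e} : Multiset ℝ) ≤ p.roots := by
    rw [Multiset.le_iff_subset hnodup]
    intro x hx
    simp only [Multiset.insert_eq_cons, Multiset.mem_cons, Multiset.mem_singleton] at hx
    rcases hx with rfl | rfl | rfl | rfl | rfl <;>
      exact (Polynomial.mem_roots hp).mpr ‹_›
  refine (Multiset.eq_of_le_of_card_le hsub ?_).symm
  have h := p.card_roots'
  rw [hdeg] at h
  simpa using h

/-- Sorting an explicit multiset. -/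
lemma stmt18_sort_eq (s : Multiset ℝ) (l : List ℝ) (h : (l : Multiset ℝ) = s)
    (hs : l.Pairwise (· ≤ ·)) : s.sort (· ≤ ·) = l := by
  refine List.Perm.eq_of_pairwise' (Multiset.pairwise_sort s _) hs ?_
  rw [← Multiset.coe_eq_coe, Multiset.sort_eq, h]

set_option maxRecDepth 100000 in
set_option maxHeartbeats 1000000 in
/-- adding the edge (2,3) to the graph strictly decreases the second smallest
eigenvalue (spectral gap) of the symmetric normalized Laplacian. -/
theorem stmt18 : sndSmallestEig (lsym adjG') < sndSmallestEig (lsym adjG) := by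
  have h3 : Real.sqrt 3 * Real.sqrt 3 = 3 := Real.mul_self_sqrt (by norm_num)
  have h3p : (0:ℝ) < Real.sqrt 3 := Real.sqrt_pos.mpr (by norm_num)
  have h3lb : (1:ℝ) < Real.sqrt 3 := by nlinarith
  have h3ub : Real.sqrt 3 < 2 := by nlinarith
  -- the polynomial data
  have hmonicG : (stmt18NG).charpoly.Monic := Matrix.charpoly_monic _
  have hmonicG' : (stmt18NG').charpoly.Monic := Matrix.charpoly_monic _
  have hdegG : (stmt18NG).charpoly.natDegree = 5 := by
    rw [Matrix.charpoly_natDegree_eq_dim]; simp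
  have hdegG' : (stmt18NG').charpoly.natDegree = 5 := by
    rw [Matrix.charpoly_natDegree_eq_dim]; simp
  -- roots of the cubic factor for G' via IVT
  set g : ℝ → ℝ := fun x => x^3 - 7/2*x^2 + 7/2*x - 5/6 with hg
  have hgc : Continuous g := by fun_prop
  obtain ⟨a, haI, hga⟩ : ∃ a ∈ Set.Ioo (0:ℝ) (2/5), g a = 0 := by
    have := intermediate_value_Ioo (by norm_num : (0:ℝ) ≤ 2/5) hgc.continuousOn
      (show (0:ℝ) ∈ Set.Ioo (g 0) (g (2/5)) by rw [Set.mem_Ioo]; norm_num [hg])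
    obtain ⟨x, hx, hx0⟩ := this
    exact ⟨x, hx, hx0⟩
  obtain ⟨b, hbI, hgb⟩ : ∃ b ∈ Set.Ioo (1:ℝ) (3/2), g b = 0 := by
    have := intermediate_value_Ioo' (by norm_num : (1:ℝ) ≤ 3/2) hgc.continuousOn
      (show (0:ℝ) ∈ Set.Ioo (g (3/2)) (g 1) by rw [Set.mem_Ioo]; norm_num [hg])
    obtain ⟨x, hx, hx0⟩ := this
    exact ⟨x, hx, hx0⟩
  obtain ⟨c, hcI, hgc0⟩ : ∃ c ∈ Set.Ioo (3/2:ℝ) 2, g c = 0 := by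
    have := intermediate_value_Ioo (by norm_num : (3/2:ℝ) ≤ 2) hgc.continuousOn
      (show (0:ℝ) ∈ Set.Ioo (g (3/2)) (g 2) by rw [Set.mem_Ioo]; norm_num [hg])
    obtain ⟨x, hx, hx0⟩ := this
    exact ⟨x, hx, hx0⟩
  obtain ⟨ha1, ha2⟩ := haI
  obtain ⟨hb1, hb2⟩ := hbI
  obtain ⟨hc1, hc2⟩ := hcI
  -- roots multiset for G'
  have hrootsG' : (stmt18NG').charpoly.roots = {0, a, b, 3/2, c} := by
    refine stmt18_roots_quintic _ hmonicG'.ne_zero hdegG' 0 a b (3/2) c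
      (by linarith) (by linarith) (by norm_num) (by linarith)
      (by linarith) (by linarith) (by linarith)
      (by linarith) (by linarith) (by linarith) ?_ ?_ ?_ ?_ ?_ <;>
      simp only [Polynomial.IsRoot, stmt18_evalNG']
    · norm_num
    · have : a^3 - 7/2*a^2 + 7/2*a - 5/6 = 0 := hga
      rw [this]; ring
    · have : b^3 - 7/2*b^2 + 7/2*b - 5/6 = 0 := hgb
      rw [this]; ring
    · norm_num
    · have : c^3 - 7/2*c^2 + 7/2*c - 5/6 = 0 := hgc0
      rw [this]; ring
  -- roots multiset for G
  have hrootsG : (stmt18NG).charpoly.roots =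
      {0, 1 - Real.sqrt 3/3, 1, 1 + Real.sqrt 3/3, 2} := by
    refine stmt18_roots_quintic _ hmonicG.ne_zero hdegG 0 (1 - Real.sqrt 3/3) 1
      (1 + Real.sqrt 3/3) 2
      (by nlinarith) (by norm_num) (by nlinarith) (by norm_num)
      (by nlinarith) (by nlinarith) (by nlinarith)
      (by nlinarith) (by nlinarith) (by nlinarith) ?_ ?_ ?_ ?_ ?_ <;>
      simp only [Polynomial.IsRoot, stmt18_evalNG]
    · norm_num
    · linear_combination ((1 - Real.sqrt 3/3) * (1 - Real.sqrt 3/3 - 1) *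
        (1 - Real.sqrt 3/3 - 2) / 9) * h3
    · norm_num
    · linear_combination ((1 + Real.sqrt 3/3) * (1 + Real.sqrt 3/3 - 1) *
        (1 + Real.sqrt 3/3 - 2) / 9) * h3
    · norm_num
  -- compute both sides
  have hG' : sndSmallestEig (lsym adjG') = a := by
    rw [sndSmallestEig, stmt18_charpolyG', hrootsG',
      stmt18_sort_eq _ [0, a, b, 3/2, c] (by rfl)
        (by
          simp only [List.pairwise_cons, List.mem_cons, List.mem_singleton, List.not_mem_nil,
            forall_eq_or_imp, forall_eq, List.Pairwise.nil, and_true]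
          norm_num
          repeat' apply And.intro
          all_goals linarith)]
    simp
  have hG : sndSmallestEig (lsym adjG) = 1 - Real.sqrt 3/3 := by
    rw [sndSmallestEig, stmt18_charpolyG, hrootsG,
      stmt18_sort_eq _ [0, 1 - Real.sqrt 3/3, 1, 1 + Real.sqrt 3/3, 2] (by rfl)
        (by
          simp only [List.pairwise_cons, List.mem_cons, List.mem_singleton, List.not_mem_nil,
            forall_eq_or_imp, forall_eq, List.Pairwise.nil, and_true]
          norm_num
          repeat' apply And.intro
          all_goals nlinarith)]
    simp
  rw [hG, hG']
  -- a < 2/5 < 1 - √3/3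
  nlinarith
end
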